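/- arXiv:2604.07216 — 5 statements merged into one kernel-verified Lean document; each statement's English description precedes it below -/
import Mathlib

section
/- Let X be a real Hilbert space and ψ₁, ψ₂ : X → (−∞,+∞] proper, closed, convex functions with common effective domain D. Suppose there exists L ≥ 0 such that |(ψ₁(z₁) − ψ₂(z₁)) − (ψ₁(z₂) − ψ₂(z₂))| ≤ L‖z₁ − z₂‖ for all z₁, z₂ ∈ D. Then for any z ∈ X and t > 0, ‖prox_{tψ₁}(z) − prox_{tψ₂}(z)‖ ≤ t L. -/
noncomputable section

/-- A function into the extended reals is proper if it never takes the value `-∞`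
and is not identically `+∞`. -/
def ProperFn {X : Type*} (ψ : X → EReal) : Prop :=
  (∀ x, ψ x ≠ ⊥) ∧ ∃ x, ψ x ≠ ⊤

/-- Convexity for extended-real-valued functions. -/
def ConvexFnE {X : Type*} [AddCommMonoid X] [Module ℝ X] (ψ : X → EReal) : Prop :=
  ∀ x y : X, ∀ a b : ℝ, 0 ≤ a → 0 ≤ b → a + b = 1 →
    ψ (a • x + b • y) ≤ (a : EReal) * ψ x + (b : EReal) * ψ y

/-- The objective function defining the proximity operator `prox_{tψ}(z)`. -/
def proxObj {X : Type*} [NormedAddCommGroup X] (ψ : X → EReal) (t : ℝ) (z x : X) : EReal :=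
  (((1 / (2 * t)) * ‖x - z‖ ^ 2 : ℝ) : EReal) + ψ x

/-- `p` is the proximal point `prox_{tψ}(z)`, i.e. a (the) global minimizer of the
prox objective. -/
def IsProx {X : Type*} [NormedAddCommGroup X] (ψ : X → EReal) (t : ℝ) (z p : X) : Prop :=
  ∀ x, proxObj ψ t z p ≤ proxObj ψ t z x

/-- The convex subdifferential of an extended-real-valued function. -/
def subdiffE {X : Type*} [NormedAddCommGroup X] [InnerProductSpace ℝ X]
    (ψ : X → EReal) (x : X) : Set X :=
  {v | ∀ y, ψ x + ((inner ℝ v (y - x) : ℝ) : EReal) ≤ ψ y}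

open Filter Topology

lemma norm_combo_aux {X : Type*} [NormedAddCommGroup X] [InnerProductSpace ℝ X]
    (u v : X) (a b : ℝ) (hab : a + b = 1) :
    ‖a • u + b • v‖ ^ 2 = a * ‖u‖ ^ 2 + b * ‖v‖ ^ 2 - a * b * ‖u - v‖ ^ 2 := by
  have h1 : ∀ w : X, ‖w‖ ^ 2 = inner ℝ w w := by
    intro w; rw [real_inner_self_eq_norm_sq]
  rw [h1, h1, h1, h1]
  simp only [inner_add_add_self, inner_sub_sub_self, real_inner_smul_left,
    real_inner_smul_right]
  linear_combination (a * (inner ℝ u u : ℝ) + b * (inner ℝ v v : ℝ)) * hab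

lemma prox_finite_aux {X : Type*} [NormedAddCommGroup X]
    {ψ : X → EReal} (hproper : ProperFn ψ) {t : ℝ} {z p : X}
    (hp : IsProx ψ t z p) : ψ p ≠ ⊤ := by
  obtain ⟨hbot, x₀, hx₀⟩ := hproper
  have h := hp x₀
  intro hpt
  rw [proxObj, proxObj, hpt] at h
  lift ψ x₀ to ℝ using ⟨hx₀, hbot x₀⟩ with r hr
  rw [EReal.coe_add_top, top_le_iff, ← EReal.coe_add] at h
  exact EReal.coe_ne_top _ h

/-- Strong-convexity refinement of the minimality of the prox point. -/
lemma prox_strong_min {X : Type*} [NormedAddCommGroup X] [InnerProductSpace ℝ X]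
    {ψ : X → EReal} (hproper : ProperFn ψ) (hconv : ConvexFnE ψ)
    {t : ℝ} (ht : 0 < t) {z p : X} (hp : IsProx ψ t z p) (x : X) (hx : ψ x ≠ ⊤) :
    (1 / (2 * t)) * ‖p - z‖ ^ 2 + (ψ p).toReal + (1 / (2 * t)) * ‖x - p‖ ^ 2 ≤
      (1 / (2 * t)) * ‖x - z‖ ^ 2 + (ψ x).toReal := by
  have hpfin : ψ p ≠ ⊤ := prox_finite_aux hproper hp
  obtain ⟨hbot, -⟩ := hproper
  have hcpos : (0 : ℝ) < 1 / (2 * t) := by positivity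
  lift ψ p to ℝ using ⟨hpfin, hbot p⟩ with rp hrp
  lift ψ x to ℝ using ⟨hx, hbot x⟩ with rx hrx
  -- For each l ∈ (0,1), test minimality at (1-l)•p + l•x
  have key : ∀ l : ℝ, l ∈ Set.Ioo (0 : ℝ) 1 →
      (1 / (2 * t)) * ‖p - z‖ ^ 2 + rp + (1 - l) * ((1 / (2 * t)) * ‖x - p‖ ^ 2) ≤
        (1 / (2 * t)) * ‖x - z‖ ^ 2 + rx := by
    intro l hl
    obtain ⟨hl0, hl1⟩ := hl
    have hab : (1 - l) + l = 1 := by ring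
    have hcv := hconv p x (1 - l) l (by linarith) (le_of_lt hl0) hab
    rw [← hrp, ← hrx] at hcv
    have hcv' : ψ ((1 - l) • p + l • x) ≤ (((1 - l) * rp + l * rx : ℝ) : EReal) := by
      calc ψ ((1 - l) • p + l • x)
          ≤ ((1 - l : ℝ) : EReal) * (rp : EReal) + (l : EReal) * (rx : EReal) := hcv
        _ = (((1 - l) * rp + l * rx : ℝ) : EReal) := by
            rw [← EReal.coe_mul, ← EReal.coe_mul, ← EReal.coe_add]
    have hyfin : ψ ((1 - l) • p + l • x) ≠ ⊤ := ne_top_of_le_ne_top (EReal.coe_ne_top _) hcv'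
    lift ψ ((1 - l) • p + l • x) to ℝ using ⟨hyfin, hbot _⟩ with ry hry
    have hry' : ry ≤ (1 - l) * rp + l * rx := by exact_mod_cast hcv'
    have hmin := hp ((1 - l) • p + l • x)
    rw [proxObj, proxObj, ← hrp, ← hry, ← EReal.coe_add, ← EReal.coe_add] at hmin
    have hmin' : (1 / (2 * t)) * ‖p - z‖ ^ 2 + rp ≤
        (1 / (2 * t)) * ‖(1 - l) • p + l • x - z‖ ^ 2 + ry := by
      exact_mod_cast hmin
    have hyz : (1 - l) • p + l • x - z = (1 - l) • (p - z) + l • (x - z) := by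
      rw [smul_sub, smul_sub]
      have hz : (1 - l) • z + l • z = z := by rw [← add_smul, hab, one_smul]
      rw [sub_eq_iff_eq_add]
      calc (1 - l) • p + l • x
          = ((1 - l) • p - (1 - l) • z) + (l • x - l • z) + ((1 - l) • z + l • z) := by abel
        _ = (1 - l) • p - (1 - l) • z + (l • x - l • z) + z := by rw [hz]
    have hnorm : ‖(1 - l) • p + l • x - z‖ ^ 2 =
        (1 - l) * ‖p - z‖ ^ 2 + l * ‖x - z‖ ^ 2 - (1 - l) * l * ‖x - p‖ ^ 2 := by
      rw [hyz, norm_combo_aux _ _ _ _ hab]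
      congr 2
      rw [← norm_neg]
      congr 1
      abel
    rw [hnorm] at hmin'
    have hcomb : (1 / (2 * t)) * ‖p - z‖ ^ 2 + rp ≤
        (1 / (2 * t)) * ((1 - l) * ‖p - z‖ ^ 2 + l * ‖x - z‖ ^ 2 - (1 - l) * l * ‖x - p‖ ^ 2)
          + ((1 - l) * rp + l * rx) := by linarith
    have hfac : l * 0 ≤ l * ((1 / (2 * t)) * ‖x - z‖ ^ 2 + rx -
        ((1 / (2 * t)) * ‖p - z‖ ^ 2 + rp + (1 - l) * ((1 / (2 * t)) * ‖x - p‖ ^ 2))) := by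
      rw [mul_zero]
      nlinarith [hcomb]
    have := (mul_le_mul_iff_right₀ hl0).mp hfac
    linarith
  -- let l → 0⁺
  simp only [EReal.toReal_coe]
  have hcont : Continuous (fun l : ℝ =>
      (1 / (2 * t)) * ‖p - z‖ ^ 2 + rp + (1 - l) * ((1 / (2 * t)) * ‖x - p‖ ^ 2)) := by
    fun_prop
  have htend := (hcont.tendsto 0).mono_left (nhdsWithin_le_nhds (s := Set.Ioi (0 : ℝ)))
  have hev : ∀ᶠ l in nhdsWithin (0 : ℝ) (Set.Ioi 0),
      (1 / (2 * t)) * ‖p - z‖ ^ 2 + rp + (1 - l) * ((1 / (2 * t)) * ‖x - p‖ ^ 2) ≤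
        (1 / (2 * t)) * ‖x - z‖ ^ 2 + rx :=
    eventually_of_mem (Ioo_mem_nhdsGT_of_mem (by constructor <;> norm_num)) key
  have hlim := le_of_tendsto htend hev
  simp only [sub_zero, one_mul] at hlim
  linarith

theorem stmt_4 {X : Type*} [NormedAddCommGroup X] [InnerProductSpace ℝ X] [CompleteSpace X]
    (ψ₁ ψ₂ : X → EReal)
    (h₁proper : ProperFn ψ₁) (h₁conv : ConvexFnE ψ₁) (h₁closed : LowerSemicontinuous ψ₁)
    (h₂proper : ProperFn ψ₂) (h₂conv : ConvexFnE ψ₂) (h₂closed : LowerSemicontinuous ψ₂)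
    (hdom : ∀ x : X, ψ₁ x ≠ ⊤ ↔ ψ₂ x ≠ ⊤)
    (L : ℝ) (hL : 0 ≤ L)
    (hlip : ∀ z₁ z₂ : X, ψ₁ z₁ ≠ ⊤ → ψ₁ z₂ ≠ ⊤ →
      |((ψ₁ z₁).toReal - (ψ₂ z₁).toReal) - ((ψ₁ z₂).toReal - (ψ₂ z₂).toReal)| ≤ L * ‖z₁ - z₂‖)
    (z : X) (t : ℝ) (ht : 0 < t) (p₁ p₂ : X)
    (hp₁ : IsProx ψ₁ t z p₁) (hp₂ : IsProx ψ₂ t z p₂) :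
    ‖p₁ - p₂‖ ≤ t * L := by
  have h1fin : ψ₁ p₁ ≠ ⊤ := prox_finite_aux h₁proper hp₁
  have h2fin : ψ₂ p₂ ≠ ⊤ := prox_finite_aux h₂proper hp₂
  have h1fin' : ψ₁ p₂ ≠ ⊤ := (hdom p₂).mpr h2fin
  have h2fin' : ψ₂ p₁ ≠ ⊤ := (hdom p₁).mp h1fin
  have hA := prox_strong_min h₁proper h₁conv ht hp₁ p₂ h1fin'
  have hB := prox_strong_min h₂proper h₂conv ht hp₂ p₁ h2fin'
  have hlip' := hlip p₂ p₁ h1fin' h1fin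
  have hrev : ‖p₂ - p₁‖ = ‖p₁ - p₂‖ := norm_sub_rev _ _
  rw [hrev] at hA hlip'
  have habs : ((ψ₁ p₂).toReal - (ψ₂ p₂).toReal) - ((ψ₁ p₁).toReal - (ψ₂ p₁).toReal)
      ≤ L * ‖p₁ - p₂‖ := le_trans (le_abs_self _) hlip'
  have hkey : (1 / t) * ‖p₁ - p₂‖ ^ 2 ≤ L * ‖p₁ - p₂‖ := by
    have ht' : 1 / (2 * t) + 1 / (2 * t) = 1 / t := by
      rw [← add_div]
      ring
    nlinarith [hA, hB, habs]
  rcases eq_or_lt_of_le (norm_nonneg (p₁ - p₂)) with h0 | h0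
  · rw [← h0]; positivity
  · have h4 : (1 / t) * ‖p₁ - p₂‖ ≤ L := by
      refine le_of_mul_le_mul_right ?_ h0
      calc (1 / t * ‖p₁ - p₂‖) * ‖p₁ - p₂‖ = 1 / t * ‖p₁ - p₂‖ ^ 2 := by ring
        _ ≤ L * ‖p₁ - p₂‖ := hkey
    calc ‖p₁ - p₂‖ = t * (1 / t * ‖p₁ - p₂‖) := by field_simp
      _ ≤ t * L := mul_le_mul_of_nonneg_left h4 ht.le
end
end

section
/- Let X, Y be real Hilbert spaces, 𝔄 ⊂ Y nonempty, closed, convex and bounded with M_𝔄 := sup_{θ∈𝔄}‖θ‖. For i = 1, 2 let w_i(x) = D_i(x − u_i) + d_i with D_i ∈ L(X,Y), u_i ∈ X, d_i ∈ Y, and let Ψ_i(x) = φ(x) + σ_𝔄(w_i(x)), where φ : X → (−∞,+∞] is proper, closed, convex. Fix t > 0, z ∈ X and set p_i := prox_{tΨ_i}(z). Then ‖p₁ − p₂‖² / max{1, ‖p₁ − p₂‖} ≤ 2 t M_𝔄 ( ‖D₁ − D₂‖_{L(X,Y)} (1 + 2‖p₁ − u₁‖) + 2‖d₁ − d₂ −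 D₂(u₁ − u₂)‖_Y ). -/
noncomputable section

/-- The support function of a set `C` in a real Hilbert space. -/
def supportFn {Y : Type*} [NormedAddCommGroup Y] [InnerProductSpace ℝ Y]
    (C : Set Y) (y : Y) : ℝ :=
  sSup ((fun v => (inner ℝ v y : ℝ)) '' C)

section aux
variable {Y : Type*} [NormedAddCommGroup Y] [InnerProductSpace ℝ Y]
variable {𝔄 : Set Y} {M : ℝ}

lemma support_le (hne : 𝔄.Nonempty) {y : Y} {c : ℝ}
    (h : ∀ θ ∈ 𝔄, (inner ℝ θ y : ℝ) ≤ c) : supportFn 𝔄 y ≤ c :=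
  csSup_le (hne.image _) (by rintro _ ⟨θ, hθ, rfl⟩; exact h θ hθ)

lemma le_support (hM : ∀ θ ∈ 𝔄, ‖θ‖ ≤ M)
    {θ : Y} (hθ : θ ∈ 𝔄) (y : Y) : (inner ℝ θ y : ℝ) ≤ supportFn 𝔄 y := by
  apply le_csSup
  · refine ⟨M * ‖y‖, ?_⟩
    rintro _ ⟨θ', hθ', rfl⟩
    exact (real_inner_le_norm θ' y).trans
      (mul_le_mul_of_nonneg_right (hM θ' hθ') (norm_nonneg y))
  · exact Set.mem_image_of_mem _ hθ

lemma support_lip (hne : 𝔄.Nonempty) (hM : ∀ θ ∈ 𝔄, ‖θ‖ ≤ M) (a b : Y) :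
    supportFn 𝔄 a ≤ supportFn 𝔄 b + M * ‖a - b‖ := by
  refine support_le hne fun θ hθ => ?_
  have h1 : (inner ℝ θ a : ℝ) = inner ℝ θ b + inner ℝ θ (a - b) := by
    rw [← inner_add_right, add_sub_cancel]
  rw [h1]
  refine add_le_add (le_support hM hθ b) ?_
  exact (real_inner_le_norm θ _).trans
    (mul_le_mul_of_nonneg_right (hM θ hθ) (norm_nonneg _))

lemma support_mid (hne : 𝔄.Nonempty) (hM : ∀ θ ∈ 𝔄, ‖θ‖ ≤ M) (a b : Y) :
    supportFn 𝔄 ((1/2 : ℝ) • a + (1/2 : ℝ) • b)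
      ≤ (supportFn 𝔄 a + supportFn 𝔄 b) / 2 := by
  refine support_le hne fun θ hθ => ?_
  rw [inner_add_right, real_inner_smul_right, real_inner_smul_right]
  have ha := le_support hM hθ a
  have hb := le_support hM hθ b
  linarith

end aux

set_option maxHeartbeats 1000000

theorem stmt_7 {X Y : Type*} [NormedAddCommGroup X] [InnerProductSpace ℝ X] [CompleteSpace X]
    [NormedAddCommGroup Y] [InnerProductSpace ℝ Y] [CompleteSpace Y]
    (𝔄 : Set Y) (M : ℝ)
    (hne : 𝔄.Nonempty) (hclosed : IsClosed 𝔄) (hconvA : Convex ℝ 𝔄)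
    (hM : ∀ θ ∈ 𝔄, ‖θ‖ ≤ M)
    (φ : X → EReal) (hproper : ProperFn φ) (hconv : ConvexFnE φ)
    (hlsc : LowerSemicontinuous φ)
    (D₁ D₂ : X →L[ℝ] Y) (u₁ u₂ : X) (d₁ d₂ : Y)
    (t : ℝ) (ht : 0 < t) (z p₁ p₂ : X)
    (hp₁ : IsProx (fun x => φ x + ((supportFn 𝔄 (D₁ (x - u₁) + d₁) : ℝ) : EReal)) t z p₁)
    (hp₂ : IsProx (fun x => φ x + ((supportFn 𝔄 (D₂ (x - u₂) + d₂) : ℝ) : EReal)) t z p₂) :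
    ‖p₁ - p₂‖ ^ 2 / max 1 ‖p₁ - p₂‖ ≤
      2 * t * M * (‖D₁ - D₂‖ * (1 + 2 * ‖p₁ - u₁‖) + 2 * ‖d₁ - d₂ - D₂ (u₁ - u₂)‖) := by
  obtain ⟨hnb, x₀, hx₀⟩ := hproper
  -- finiteness of φ at a prox point
  have fin : ∀ (D : X →L[ℝ] Y) (u : X) (dd : Y) (p : X),
      IsProx (fun x => φ x + ((supportFn 𝔄 (D (x - u) + dd) : ℝ) : EReal)) t z p →
      φ p ≠ ⊤ := by
    intro D u dd p hp hT
    have h := hp x₀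
    have hLHS : proxObj (fun x => φ x + ((supportFn 𝔄 (D (x - u) + dd) : ℝ) : EReal)) t z p
        = ⊤ := by
      simp only [proxObj, hT, EReal.top_add_coe, EReal.coe_add_top]
    have hRHS : proxObj (fun x => φ x + ((supportFn 𝔄 (D (x - u) + dd) : ℝ) : EReal)) t z x₀
        < ⊤ := by
      simp only [proxObj]
      exact EReal.add_lt_top (EReal.coe_lt_top _).ne
        (EReal.add_lt_top hx₀ (EReal.coe_lt_top _).ne).ne
    rw [hLHS] at h
    exact absurd (lt_of_le_of_lt h hRHS) (lt_irrefl _)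
  have hT1 : φ p₁ ≠ ⊤ := fin D₁ u₁ d₁ p₁ hp₁
  have hT2 : φ p₂ ≠ ⊤ := fin D₂ u₂ d₂ p₂ hp₂
  set a₁ := (φ p₁).toReal with ha₁
  set a₂ := (φ p₂).toReal with ha₂
  have hφ1 : φ p₁ = (a₁ : EReal) := (EReal.coe_toReal hT1 (hnb p₁)).symm
  have hφ2 : φ p₂ = (a₂ : EReal) := (EReal.coe_toReal hT2 (hnb p₂)).symm
  set m : X := (1/2 : ℝ) • p₁ + (1/2 : ℝ) • p₂ with hm
  -- the key real inequality coming from optimality at the midpoint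
  have step : ∀ (D : X →L[ℝ] Y) (u : X) (dd : Y) (p : X) (a : ℝ),
      IsProx (fun x => φ x + ((supportFn 𝔄 (D (x - u) + dd) : ℝ) : EReal)) t z p →
      φ p = (a : EReal) →
      1/(2*t) * ‖p - z‖^2 + a + supportFn 𝔄 (D (p - u) + dd)
        ≤ 1/(2*t) * ‖m - z‖^2 + (a₁ + a₂)/2
          + (supportFn 𝔄 (D (p₁ - u) + dd) + supportFn 𝔄 (D (p₂ - u) + dd))/2 := by
    intro D u dd p a hp hφp
    have h := hp m
    have hφm : φ m ≤ (((a₁ + a₂)/2 : ℝ) : EReal) := by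
      have hc := hconv p₁ p₂ (1/2) (1/2) (by norm_num) (by norm_num) (by norm_num)
      rw [hφ1, hφ2, ← EReal.coe_mul, ← EReal.coe_mul, ← EReal.coe_add] at hc
      exact hc.trans_eq (by norm_cast; ring)
    have harg : D (m - u) + dd
        = (1/2 : ℝ) • (D (p₁ - u) + dd) + (1/2 : ℝ) • (D (p₂ - u) + dd) := by
      have h0 : m - u = (1/2 : ℝ) • (p₁ - u) + (1/2 : ℝ) • (p₂ - u) := by
        rw [hm]; module
      rw [h0, map_add, map_smul, map_smul, smul_add, smul_add]
      module
    have hSm : supportFn 𝔄 (D (m - u) + dd)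
        ≤ (supportFn 𝔄 (D (p₁ - u) + dd) + supportFn 𝔄 (D (p₂ - u) + dd))/2 := by
      rw [harg]; exact support_mid hne hM _ _
    have hmid : proxObj (fun x => φ x + ((supportFn 𝔄 (D (x - u) + dd) : ℝ) : EReal)) t z m
        ≤ ((1/(2*t) * ‖m - z‖^2 + (a₁ + a₂)/2
          + (supportFn 𝔄 (D (p₁ - u) + dd) + supportFn 𝔄 (D (p₂ - u) + dd))/2 : ℝ) : EReal) := by
      simp only [proxObj]
      calc ((1/(2*t) * ‖m - z‖^2 : ℝ) : EReal)
            + (φ m + ((supportFn 𝔄 (D (m - u) + dd) : ℝ) : EReal))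
          ≤ ((1/(2*t) * ‖m - z‖^2 : ℝ) : EReal)
            + ((((a₁ + a₂)/2 : ℝ) : EReal)
              + (((supportFn 𝔄 (D (p₁ - u) + dd) + supportFn 𝔄 (D (p₂ - u) + dd))/2 : ℝ) : EReal)) := by
            exact add_le_add_right (add_le_add hφm (EReal.coe_le_coe_iff.mpr hSm)) _
        _ = _ := by rw [← EReal.coe_add, ← EReal.coe_add, add_assoc]
    have hpt : proxObj (fun x => φ x + ((supportFn 𝔄 (D (x - u) + dd) : ℝ) : EReal)) t z p
        = ((1/(2*t) * ‖p - z‖^2 + a + supportFn 𝔄 (D (p - u) + dd) : ℝ) : EReal) := by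
      simp only [proxObj, hφp, ← EReal.coe_add, add_assoc]
    rw [hpt] at h
    exact EReal.coe_le_coe_iff.mp (h.trans hmid)
  have hA := step D₁ u₁ d₁ p₁ a₁ hp₁ hφ1
  have hB := step D₂ u₂ d₂ p₂ a₂ hp₂ hφ2
  -- parallelogram identity
  have hpar : ‖p₁ - z‖^2 + ‖p₂ - z‖^2 = 2*‖m - z‖^2 + ‖p₁ - p₂‖^2/2 := by
    have hmz : m - z = (1/2 : ℝ) • ((p₁ - z) + (p₂ - z)) := by rw [hm]; module
    have hd : p₁ - p₂ = (p₁ - z) - (p₂ - z) := by abel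
    have hpl := parallelogram_law_with_norm ℝ (p₁ - z) (p₂ - z)
    have hn : ‖m - z‖ = (1/2 : ℝ) * ‖(p₁ - z) + (p₂ - z)‖ := by
      rw [hmz, norm_smul]; norm_num
    rw [hn, hd]
    nlinarith [hpl]
  -- Lipschitz estimates for the support function terms
  set E : Y := d₁ - d₂ - D₂ (u₁ - u₂) with hE
  have hw : ∀ x : X, (D₁ (x - u₁) + d₁) - (D₂ (x - u₂) + d₂) = (D₁ - D₂) (x - u₁) + E := by
    intro x
    simp only [ContinuousLinearMap.sub_apply, hE, map_sub]
    abel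
  have hM0 : 0 ≤ M := (norm_nonneg hne.choose).trans (hM _ hne.choose_spec)
  have hwlip : ∀ x : X, ‖(D₁ (x - u₁) + d₁) - (D₂ (x - u₂) + d₂)‖
      ≤ ‖D₁ - D₂‖ * ‖x - u₁‖ + ‖E‖ := by
    intro x
    rw [hw x]
    exact (norm_add_le _ _).trans (add_le_add_left ((D₁ - D₂).le_opNorm _) _)
  have hlip1 : supportFn 𝔄 (D₁ (p₂ - u₁) + d₁)
      ≤ supportFn 𝔄 (D₂ (p₂ - u₂) + d₂) + M * (‖D₁ - D₂‖ * ‖p₂ - u₁‖ + ‖E‖) := by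
    refine (support_lip hne hM _ _).trans (add_le_add_right ?_ _)
    exact mul_le_mul_of_nonneg_left (hwlip p₂) hM0
  have hlip2 : supportFn 𝔄 (D₂ (p₁ - u₂) + d₂)
      ≤ supportFn 𝔄 (D₁ (p₁ - u₁) + d₁) + M * (‖D₁ - D₂‖ * ‖p₁ - u₁‖ + ‖E‖) := by
    have := support_lip hne hM (D₂ (p₁ - u₂) + d₂) (D₁ (p₁ - u₁) + d₁)
    refine this.trans (add_le_add_right ?_ _)
    have : ‖(D₂ (p₁ - u₂) + d₂) - (D₁ (p₁ - u₁) + d₁)‖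
        = ‖(D₁ (p₁ - u₁) + d₁) - (D₂ (p₁ - u₂) + d₂)‖ := norm_sub_rev _ _
    rw [this]
    exact mul_le_mul_of_nonneg_left (hwlip p₁) hM0
  -- combine
  have e0 : ‖p₁ - p₂‖^2/2 = ‖p₁ - z‖^2 + ‖p₂ - z‖^2 - 2*‖m - z‖^2 := by linarith
  have h6 : (1/(2*t)) * (‖p₁ - p₂‖^2/2)
      ≤ (M * (‖D₁ - D₂‖ * ‖p₂ - u₁‖ + ‖E‖) + M * (‖D₁ - D₂‖ * ‖p₁ - u₁‖ + ‖E‖))/2 := by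
    have e1 : (1/(2*t)) * (‖p₁ - p₂‖^2/2)
        = 1/(2*t) * ‖p₁ - z‖^2 + 1/(2*t) * ‖p₂ - z‖^2 - 2*(1/(2*t) * ‖m - z‖^2) := by
      rw [e0]; ring
    rw [e1]
    linarith
  have h7 : ‖p₁ - p₂‖^2/2
      ≤ (2*t) * ((M * (‖D₁ - D₂‖ * ‖p₂ - u₁‖ + ‖E‖) + M * (‖D₁ - D₂‖ * ‖p₁ - u₁‖ + ‖E‖))/2) := by
    have h8 := mul_le_mul_of_nonneg_left h6 (show (0:ℝ) ≤ 2*t by positivity)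
    calc ‖p₁ - p₂‖^2/2 = (2*t) * ((1/(2*t)) * (‖p₁ - p₂‖^2/2)) := by
          field_simp
      _ ≤ _ := h8
  have hmain : ‖p₁ - p₂‖^2
      ≤ 2*t*M*(‖D₁ - D₂‖*(‖p₁ - u₁‖ + ‖p₂ - u₁‖) + 2*‖E‖) := by linarith
  -- final arithmetic with the max
  set K : ℝ := max 1 ‖p₁ - p₂‖ with hK
  have hK1 : (1:ℝ) ≤ K := le_max_left _ _
  have hKd : ‖p₁ - p₂‖ ≤ K := le_max_right _ _
  have hK0 : (0:ℝ) < K := lt_of_lt_of_le one_pos hK1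
  rw [div_le_iff₀ hK0]
  have hΔ : (0:ℝ) ≤ ‖D₁ - D₂‖ := norm_nonneg _
  have hE0 : (0:ℝ) ≤ ‖E‖ := norm_nonneg _
  have hx1 : (0:ℝ) ≤ ‖p₁ - u₁‖ := norm_nonneg _
  have htri : ‖p₂ - u₁‖ ≤ ‖p₁ - u₁‖ + ‖p₁ - p₂‖ := by
    have : p₂ - u₁ = (p₁ - u₁) - (p₁ - p₂) := by abel
    rw [this]
    exact norm_sub_le _ _
  have c1 : ‖D₁ - D₂‖*(‖p₁ - u₁‖ + ‖p₂ - u₁‖) + 2*‖E‖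
      ≤ K * (‖D₁ - D₂‖*(1 + 2*‖p₁ - u₁‖) + 2*‖E‖) := by
    have f1 : ‖D₁ - D₂‖ * ‖p₂ - u₁‖ ≤ ‖D₁ - D₂‖ * (‖p₁ - u₁‖ + K) :=
      mul_le_mul_of_nonneg_left (htri.trans (add_le_add_right hKd _)) hΔ
    have f2 : 0 ≤ (K - 1) * (‖D₁ - D₂‖ * ‖p₁ - u₁‖) :=
      mul_nonneg (by linarith) (mul_nonneg hΔ hx1)
    have f3 : 0 ≤ (K - 1) * ‖E‖ := mul_nonneg (by linarith) hE0
    linarith [f1, f2, f3]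
  have htM : (0:ℝ) ≤ 2*t*M := by positivity
  have c2 := mul_le_mul_of_nonneg_left c1 htM
  calc ‖p₁ - p₂‖^2 ≤ 2*t*M*(‖D₁ - D₂‖*(‖p₁ - u₁‖ + ‖p₂ - u₁‖) + 2*‖E‖) := hmain
    _ ≤ 2*t*M*(K * (‖D₁ - D₂‖*(1 + 2*‖p₁ - u₁‖) + 2*‖E‖)) := c2
    _ = 2*t*M*(‖D₁ - D₂‖*(1 + 2*‖p₁ - u₁‖) + 2*‖E‖) * K := by ring
end
end

section
/- Let X be a real Hilbert space, φ : X → (−∞,+∞] proper, closed, convex, A ∈ L(X,Y) for a real Hilbert space Y, 𝔄 ⊂ Y nonempty closed convex bounded, r > 0, z ∈ X, x₀ ∈ X, b ∈ Y. Define ψ(x) := φ(x) + σ_𝔄(A(x−x₀)+b). If θ̄ ∈ 𝔄 maximizes the dual function d(θ) := min_{x∈X} { (1/(2r))‖x−z‖² + φ(x) + ⟨θ, A(x−x₀)+b⟩ } over 𝔄, then prox_{rψ}(z) = prox_{rφ}(z − r A*θ̄). -/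
noncomputable section

private lemma ereal_coe_of (e : EReal) (h1 : e ≠ ⊥) (h2 : e ≠ ⊤) : ∃ a : ℝ, e = (a : EReal) :=
  ⟨e.toReal, (EReal.coe_toReal h2 h1).symm⟩

private lemma midnorm {X : Type*} [NormedAddCommGroup X] [InnerProductSpace ℝ X]
    (u v w : X) :
    ‖((1/2:ℝ) • u + (1/2:ℝ) • v) - w‖ ^ 2
      = (1/2) * ‖u - w‖ ^ 2 + (1/2) * ‖v - w‖ ^ 2 - (1/4) * ‖u - v‖ ^ 2 := by
  have h : ((1/2:ℝ) • u + (1/2:ℝ) • v) - w = (1/2:ℝ) • ((u - w) + (v - w)) := by module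
  have hp := parallelogram_law_with_norm ℝ (u - w) (v - w)
  have h2 : (u - w) - (v - w) = u - v := by abel
  rw [h2] at hp
  rw [h, norm_smul]
  have habs : |(1/2:ℝ)| = 1/2 := by norm_num
  simp only [Real.norm_eq_abs, habs]
  nlinarith [norm_nonneg ((u-w)+(v-w)), norm_nonneg (u-v), norm_nonneg (u-w), norm_nonneg (v-w), abs_of_pos (by norm_num : (0:ℝ) < 1/2)]

private lemma prox_unique {X : Type*} [NormedAddCommGroup X] [InnerProductSpace ℝ X]
    (ψ : X → EReal) (r : ℝ) (hr : 0 < r) (z : X)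
    (hbot : ∀ x, ψ x ≠ ⊥) (hfin : ∃ x, ψ x ≠ ⊤)
    (hmc : ∀ u v : X, ∀ a c : ℝ, ψ u = (a : EReal) → ψ v = (c : EReal) →
      ψ ((1/2:ℝ) • u + (1/2:ℝ) • v) ≤ (((a + c)/2 : ℝ) : EReal))
    (q1 q2 : X) (h1 : IsProx ψ r z q1) (h2 : IsProx ψ r z q2) : q1 = q2 := by
  obtain ⟨x₁, hx₁⟩ := hfin
  obtain ⟨a₁, ha₁⟩ := ereal_coe_of (ψ x₁) (hbot x₁) hx₁
  have hfin' : ∀ q : X, IsProx ψ r z q → ∃ a : ℝ, ψ q = (a : EReal) := by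
    intro q hq
    refine ereal_coe_of _ (hbot q) ?_
    intro h
    have := hq x₁
    rw [proxObj, proxObj, h, ha₁, ← EReal.coe_add, EReal.coe_add_top, top_le_iff] at this
    exact EReal.coe_ne_top _ this
  obtain ⟨a, ha⟩ := hfin' q1 h1
  obtain ⟨c, hc⟩ := hfin' q2 h2
  set m := (1/2:ℝ) • q1 + (1/2:ℝ) • q2 with hm
  have hmψ := hmc q1 q2 a c ha hc
  have e1 : proxObj ψ r z q1 ≤ proxObj ψ r z m := h1 m
  have e2 : proxObj ψ r z q2 ≤ proxObj ψ r z m := h2 m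
  have hmid : ‖m - z‖^2 = (1/2) * ‖q1 - z‖ ^ 2 + (1/2) * ‖q2 - z‖ ^ 2 - (1/4) * ‖q1 - q2‖ ^ 2 :=
    midnorm q1 q2 z
  have e1' : ((1 / (2*r)) * ‖q1 - z‖^2 + a : ℝ) ≤
      (1 / (2*r)) * ‖m - z‖^2 + (a + c)/2 := by
    have : proxObj ψ r z q1 ≤ (((1 / (2*r)) * ‖m - z‖^2 + (a+c)/2 : ℝ) : EReal) := by
      refine e1.trans ?_
      rw [proxObj, EReal.coe_add]
      exact add_le_add_right hmψ _
    rw [proxObj, ha, ← EReal.coe_add] at this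
    exact_mod_cast this
  have e2' : ((1 / (2*r)) * ‖q2 - z‖^2 + c : ℝ) ≤
      (1 / (2*r)) * ‖m - z‖^2 + (a + c)/2 := by
    have : proxObj ψ r z q2 ≤ (((1 / (2*r)) * ‖m - z‖^2 + (a+c)/2 : ℝ) : EReal) := by
      refine e2.trans ?_
      rw [proxObj, EReal.coe_add]
      exact add_le_add_right hmψ _
    rw [proxObj, hc, ← EReal.coe_add] at this
    exact_mod_cast this
  have hD : ‖q1 - q2‖^2 ≤ 0 := by
    rw [hmid] at e1' e2'
    have h2r : 0 < 1/(2*r) := by positivity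
    nlinarith [sq_nonneg ‖q1 - q2‖]
  have : ‖q1 - q2‖ = 0 := by nlinarith [norm_nonneg (q1 - q2), sq_nonneg ‖q1-q2‖]
  rw [norm_eq_zero, sub_eq_zero] at this
  exact this

theorem stmt_11 {X Y : Type*} [NormedAddCommGroup X] [InnerProductSpace ℝ X] [CompleteSpace X]
    [NormedAddCommGroup Y] [InnerProductSpace ℝ Y] [CompleteSpace Y]
    (φ : X → EReal) (hproper : ProperFn φ) (hconv : ConvexFnE φ)
    (hlsc : LowerSemicontinuous φ)
    (A : X →L[ℝ] Y)
    (𝔄 : Set Y) (hne : 𝔄.Nonempty) (hclosed : IsClosed 𝔄) (hconvA : Convex ℝ 𝔄)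
    (M : ℝ) (hM : ∀ θ ∈ 𝔄, ‖θ‖ ≤ M)
    (r : ℝ) (hr : 0 < r) (z x₀ : X) (b : Y)
    -- the Lagrangian of the dual problem
    (L : Y → X → EReal)
    (hL : ∀ θ x, L θ x =
      (((1 / (2 * r)) * ‖x - z‖ ^ 2 + (inner ℝ θ (A (x - x₀) + b) : ℝ) : ℝ) : EReal) + φ x)
    -- for each θ, `pbar θ` is the unique minimizer of the inner problem
    (pbar : Y → X) (hpbar : ∀ θ : Y, ∀ x : X, L θ (pbar θ) ≤ L θ x)
    -- θb maximizes the dual function d(θ) = min_x L(θ,x) over 𝔄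
    (θb : Y) (hθbmem : θb ∈ 𝔄) (hθbmax : ∀ θ ∈ 𝔄, L θ (pbar θ) ≤ L θb (pbar θb)) :
    -- prox_{rψ}(z) = prox_{rφ}(z - r A* θb), where ψ(x) = φ(x) + σ_𝔄(A(x-x₀)+b)
    ∀ q pφ : X,
      IsProx (fun x => φ x + ((supportFn 𝔄 (A (x - x₀) + b) : ℝ) : EReal)) r z q →
      IsProx φ r (z - r • (ContinuousLinearMap.adjoint A) θb) pφ →
      q = pφ := by
  intro q pφ hq hpφ
  obtain ⟨hbot, x₁, hx₁⟩ := hproper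
  obtain ⟨a₁, ha₁⟩ := ereal_coe_of _ (hbot x₁) hx₁
  -- φ is finite at every pbar θ
  have hφfin : ∀ θ : Y, ∃ a : ℝ, φ (pbar θ) = (a : EReal) := by
    intro θ
    refine ereal_coe_of _ (hbot _) ?_
    intro htop
    have h := hpbar θ x₁
    rw [hL, hL, htop, ha₁, EReal.coe_add_top, ← EReal.coe_add, top_le_iff] at h
    exact EReal.coe_ne_top _ h
  -- support function basics
  have hbdd : ∀ y : Y, BddAbove ((fun v => (inner ℝ v y : ℝ)) '' 𝔄) := by
    intro y
    refine ⟨M * ‖y‖, ?_⟩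
    rintro _ ⟨v, hv, rfl⟩
    exact (real_inner_le_norm v y).trans (mul_le_mul_of_nonneg_right (hM v hv) (norm_nonneg y))
  have hσ_ge : ∀ θ ∈ 𝔄, ∀ y : Y, (inner ℝ θ y : ℝ) ≤ supportFn 𝔄 y := by
    intro θ hθ y
    exact le_csSup (hbdd y) ⟨θ, hθ, rfl⟩
  have hσ_le : ∀ (y : Y) (c : ℝ), (∀ θ ∈ 𝔄, (inner ℝ θ y : ℝ) ≤ c) → supportFn 𝔄 y ≤ c := by
    intro y c h
    refine csSup_le (hne.image _) ?_
    rintro _ ⟨θ, hθ, rfl⟩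
    exact h θ hθ
  -- midpoint identity for the affine map x ↦ A (x - x₀) + b
  have hgmid : ∀ u v : X, A (((1/2:ℝ) • u + (1/2:ℝ) • v) - x₀) + b
      = (1/2:ℝ) • (A (u - x₀) + b) + (1/2:ℝ) • (A (v - x₀) + b) := by
    intro u v
    have h1 : ((1/2:ℝ) • u + (1/2:ℝ) • v) - x₀ = (1/2:ℝ) • (u - x₀) + (1/2:ℝ) • (v - x₀) := by
      module
    rw [h1, map_add, map_smul, map_smul]
    module
  -- quadratic growth of the inner objective around its minimizer
  have hgrow : ∀ θ : Y, ∀ x : X, ∀ fp fx : ℝ, φ (pbar θ) = (fp : EReal) → φ x = (fx : EReal) →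
      (1/(2*r)) * ‖pbar θ - z‖^2 + (inner ℝ θ (A (pbar θ - x₀) + b) : ℝ) + fp
        + (1/(4*r)) * ‖x - pbar θ‖^2
      ≤ (1/(2*r)) * ‖x - z‖^2 + (inner ℝ θ (A (x - x₀) + b) : ℝ) + fx := by
    intro θ x fp fx hfp hfx
    set p := pbar θ with hp
    set m := (1/2:ℝ) • x + (1/2:ℝ) • p with hm
    have hφm : φ m ≤ (((1/2)*fx + (1/2)*fp : ℝ) : EReal) := by
      have h := hconv x p (1/2) (1/2) (by norm_num) (by norm_num) (by norm_num)
      rw [hfx, hfp] at h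
      exact h.trans_eq (by norm_cast)
    have hipm : (inner ℝ θ (A (m - x₀) + b) : ℝ)
        = (1/2) * (inner ℝ θ (A (x - x₀) + b) : ℝ) + (1/2) * (inner ℝ θ (A (p - x₀) + b) : ℝ) := by
      rw [hm, hgmid x p, inner_add_right, real_inner_smul_right, real_inner_smul_right]
    have hmid : ‖m - z‖^2 = (1/2)*‖x - z‖^2 + (1/2)*‖p - z‖^2 - (1/4)*‖x - p‖^2 := midnorm x p z
    have hreal : (1/(2*r)) * ‖p - z‖^2 + (inner ℝ θ (A (p - x₀) + b) : ℝ) + fp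
        ≤ (1/(2*r)) * ‖m - z‖^2 + (inner ℝ θ (A (m - x₀) + b) : ℝ) + ((1/2)*fx + (1/2)*fp) := by
      have h2 : L θ m ≤ (((1/(2*r)) * ‖m - z‖^2 + (inner ℝ θ (A (m - x₀) + b) : ℝ)
          + ((1/2)*fx + (1/2)*fp) : ℝ) : EReal) := by
        rw [hL]
        calc (((1/(2*r)) * ‖m - z‖^2 + (inner ℝ θ (A (m - x₀) + b) : ℝ) : ℝ) : EReal) + φ m
            ≤ (((1/(2*r)) * ‖m - z‖^2 + (inner ℝ θ (A (m - x₀) + b) : ℝ) : ℝ) : EReal)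
              + (((1/2)*fx + (1/2)*fp : ℝ) : EReal) := add_le_add_right hφm _
          _ = _ := by norm_cast
      have h3 := (hpbar θ m).trans h2
      rw [hL, hfp, ← EReal.coe_add] at h3
      exact_mod_cast h3
    rw [hmid, hipm] at hreal
    have hr4 : (1:ℝ)/(4*r) = (1/(2*r))/2 := by
      field_simp; ring
    rw [hr4]
    linarith [hreal]
  -- variational inequality at θb
  have hVI : ∀ θ ∈ 𝔄, (inner ℝ θ (A (pbar θb - x₀) + b) : ℝ)
      ≤ (inner ℝ θb (A (pbar θb - x₀) + b) : ℝ) := by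
    intro θ hθ
    by_contra hcon
    push_neg at hcon
    set p := pbar θb with hp
    set cv := (inner ℝ (θb - θ) (A (p - x₀) + b) : ℝ) with hcv
    have hcvneg : cv < 0 := by
      rw [hcv, inner_sub_left]
      linarith
    set K := ‖θb - θ‖ * ‖A‖ with hK
    have hK0 : (0:ℝ) ≤ K := by positivity
    obtain ⟨fp, hfp⟩ := hφfin θb
    -- the master inequality
    have hstar : ∀ t : ℝ, 0 < t → t ≤ 1 →
        ‖pbar (θb + t • (θ - θb)) - p‖^2
          ≤ 4*r*t*(cv + K * ‖pbar (θb + t • (θ - θb)) - p‖) := by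
      intro t ht0 ht1
      set θt := θb + t • (θ - θb) with hθt
      have hθtmem : θt ∈ 𝔄 := by
        have h1 : θt = (1 - t) • θb + t • θ := by rw [hθt]; module
        rw [h1]
        exact hconvA hθbmem hθ (by linarith) (by linarith) (by ring)
      obtain ⟨ft, hft⟩ := hφfin θt
      set pt := pbar θt with hpt
      set s := ‖pt - p‖ with hs
      have hi : (1/(2*r)) * ‖pt - z‖^2 + (inner ℝ θt (A (pt - x₀) + b) : ℝ) + ft
          ≤ (1/(2*r)) * ‖p - z‖^2 + (inner ℝ θb (A (p - x₀) + b) : ℝ) + fp := by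
        have h := hθbmax θt hθtmem
        rw [hL, hL, hft, hfp, ← EReal.coe_add, ← EReal.coe_add] at h
        exact_mod_cast h
      have hii := hgrow θb pt fp ft hfp hft
      have hiii : (inner ℝ θt (A (pt - x₀) + b) : ℝ)
          = (inner ℝ θb (A (pt - x₀) + b) : ℝ) + t * (inner ℝ (θ - θb) (A (pt - x₀) + b) : ℝ) := by
        rw [hθt, inner_add_left, real_inner_smul_left]
      have hneg : (inner ℝ (θ - θb) (A (pt - x₀) + b) : ℝ)
          = -(inner ℝ (θb - θ) (A (pt - x₀) + b) : ℝ) := by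
        rw [inner_sub_left, inner_sub_left]; ring
      have hiv : (inner ℝ (θb - θ) (A (pt - x₀) + b) : ℝ) ≤ cv + K * s := by
        have hvec : A (pt - x₀) + b = (A (p - x₀) + b) + A (pt - p) := by
          have h1 : pt - x₀ = (p - x₀) + (pt - p) := by abel
          rw [h1, map_add]; abel
        rw [hvec, inner_add_right]
        have h1 : (inner ℝ (θb - θ) (A (pt - p)) : ℝ) ≤ ‖θb - θ‖ * (‖A‖ * ‖pt - p‖) :=
          (real_inner_le_norm _ _).trans
            (mul_le_mul_of_nonneg_left (A.le_opNorm _) (norm_nonneg _))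
        have h2 : K * s = ‖θb - θ‖ * (‖A‖ * ‖pt - p‖) := by rw [hK, hs]; ring
        rw [hcv]
        linarith
      -- combine: (1/(4r)) s^2 ≤ t * (inner ℝ (θb-θ) (g pt)) ≤ t*(cv+K*s)
      have hmain : (1/(4*r)) * s^2 ≤ t * (cv + K * s) := by
        have h5 : (1/(4*r)) * s^2 ≤ t * (inner ℝ (θb - θ) (A (pt - x₀) + b) : ℝ) := by
          rw [hneg] at hiii
          rw [hs]
          linarith [hi, hii, hiii]
        have h6 : t * (inner ℝ (θb - θ) (A (pt - x₀) + b) : ℝ) ≤ t * (cv + K * s) :=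
          mul_le_mul_of_nonneg_left hiv ht0.le
        linarith
      have h4r : (0:ℝ) < 4*r := by linarith
      calc s^2 = (4*r) * ((1/(4*r)) * s^2) := by field_simp
        _ ≤ (4*r) * (t*(cv + K*s)) := mul_le_mul_of_nonneg_left hmain h4r.le
        _ = 4*r*t*(cv + K*s) := by ring
    -- K must be positive
    have hKpos : (0:ℝ) < K := by
      rcases lt_or_eq_of_le hK0 with h | h
      · exact h
      · exfalso
        have h1 := hstar 1 one_pos le_rfl
        set s1 := ‖pbar (θb + (1:ℝ) • (θ - θb)) - p‖ with hs1
        have hKs1 : K * s1 = 0 := by rw [← h]; ring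
        have hrc : r * cv < 0 := mul_neg_of_pos_of_neg hr hcvneg
        nlinarith [sq_nonneg s1]
    -- pick the small parameter t₀
    have hden : (0:ℝ) < 8*r*K^2 := by positivity
    set t₀ := min 1 ((-cv)/(8*r*K^2)) with ht₀def
    have ht₀pos : 0 < t₀ := lt_min one_pos (div_pos (neg_pos.mpr hcvneg) hden)
    have ht₀le1 : t₀ ≤ 1 := min_le_left _ _
    have hb' : 8*r*K^2*t₀ ≤ -cv := by
      have h := min_le_right 1 ((-cv)/(8*r*K^2))
      calc 8*r*K^2*t₀ ≤ 8*r*K^2*((-cv)/(8*r*K^2)) := mul_le_mul_of_nonneg_left h hden.le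
        _ = -cv := by field_simp
    have hA := hstar t₀ ht₀pos ht₀le1
    set s := ‖pbar (θb + t₀ • (θ - θb)) - p‖ with hsdef
    have hs0 : (0:ℝ) ≤ s := norm_nonneg _
    have hKs : 0 ≤ cv + K*s := by
      by_contra h
      push_neg at h
      have h0 : (0:ℝ) ≤ 4*r*t₀*(cv + K*s) := (sq_nonneg s).trans hA
      have h1 : 4*r*t₀*(cv + K*s) < 0 := mul_neg_of_pos_of_neg (by positivity) h
      linarith
    have p1 : 2*K^2*s^2 ≤ 2*K^2*(4*r*t₀*(cv + K*s)) :=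
      mul_le_mul_of_nonneg_left hA (by positivity)
    have p2 : (8*r*K^2*t₀)*(K*s) ≤ (-cv)*(K*s) :=
      mul_le_mul_of_nonneg_right hb' (mul_nonneg hK0 hs0)
    have p3 : (8*r*K^2*t₀)*cv < 0 := mul_neg_of_pos_of_neg (by positivity) hcvneg
    have p4 : 0 ≤ (cv + K*s)*(K*s) := mul_nonneg hKs (mul_nonneg hK0 hs0)
    linarith [p1, p2, p3, p4, sq_nonneg (K*s)]
  -- notation
  obtain ⟨fp, hfp⟩ := hφfin θb
  -- support function equality at the optimal point
  have hσeq : supportFn 𝔄 (A (pbar θb - x₀) + b) = (inner ℝ θb (A (pbar θb - x₀) + b) : ℝ) :=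
    le_antisymm (hσ_le _ _ hVI) (hσ_ge θb hθbmem _)
  -- cancellation lemma for EReal
  have hcancel : ∀ (e : EReal) (sv tv : ℝ), e + (sv : EReal) = (tv : EReal) →
      e = ((tv - sv : ℝ) : EReal) := by
    intro e sv tv h
    induction e using EReal.rec with
    | bot => simp at h
    | coe x =>
      rw [← EReal.coe_add] at h
      have hx : x + sv = tv := by exact_mod_cast h
      have : x = tv - sv := by linarith
      exact_mod_cast this
    | top => rw [EReal.top_add_coe] at h; simp at h
  -- midpoint convexity of the support-function composition
  have hσmid : ∀ u v : X, supportFn 𝔄 (A (((1/2:ℝ) • u + (1/2:ℝ) • v) - x₀) + b)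
      ≤ (1/2) * supportFn 𝔄 (A (u - x₀) + b) + (1/2) * supportFn 𝔄 (A (v - x₀) + b) := by
    intro u v
    refine hσ_le _ _ ?_
    intro θ hθ
    rw [hgmid u v, inner_add_right, real_inner_smul_right, real_inner_smul_right]
    have h1 := hσ_ge θ hθ (A (u - x₀) + b)
    have h2 := hσ_ge θ hθ (A (v - x₀) + b)
    linarith
  -- the function ψ of the primal prox problem
  set ψf : X → EReal := fun x => φ x + ((supportFn 𝔄 (A (x - x₀) + b) : ℝ) : EReal) with hψf
  have hψbot : ∀ x, ψf x ≠ ⊥ := by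
    intro x h
    rw [hψf] at h
    rw [EReal.add_eq_bot_iff] at h
    rcases h with h | h
    · exact hbot x h
    · exact EReal.coe_ne_bot _ h
  have hψfin : ∃ x, ψf x ≠ ⊤ := by
    refine ⟨x₁, ?_⟩
    rw [hψf]
    simp only [ha₁, ← EReal.coe_add]
    exact EReal.coe_ne_top _
  have hψmc : ∀ u v : X, ∀ a c : ℝ, ψf u = (a : EReal) → ψf v = (c : EReal) →
      ψf ((1/2:ℝ) • u + (1/2:ℝ) • v) ≤ (((a + c)/2 : ℝ) : EReal) := by
    intro u v a c hu hv
    rw [hψf] at hu hv ⊢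
    simp only at hu hv ⊢
    have hu' := hcancel _ _ _ hu
    have hv' := hcancel _ _ _ hv
    have hφm : φ ((1/2:ℝ) • u + (1/2:ℝ) • v)
        ≤ (((1/2) * (a - supportFn 𝔄 (A (u - x₀) + b))
            + (1/2) * (c - supportFn 𝔄 (A (v - x₀) + b)) : ℝ) : EReal) := by
      have h := hconv u v (1/2) (1/2) (by norm_num) (by norm_num) (by norm_num)
      rw [hu', hv'] at h
      exact h.trans_eq (by norm_cast)
    calc φ ((1/2:ℝ) • u + (1/2:ℝ) • v)
          + ((supportFn 𝔄 (A (((1/2:ℝ) • u + (1/2:ℝ) • v) - x₀) + b) : ℝ) : EReal)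
        ≤ (((1/2) * (a - supportFn 𝔄 (A (u - x₀) + b))
            + (1/2) * (c - supportFn 𝔄 (A (v - x₀) + b)) : ℝ) : EReal)
          + (((1/2) * supportFn 𝔄 (A (u - x₀) + b)
              + (1/2) * supportFn 𝔄 (A (v - x₀) + b) : ℝ) : EReal) :=
          add_le_add hφm (EReal.coe_le_coe_iff.mpr (hσmid u v))
      _ = (((a + c)/2 : ℝ) : EReal) := by
          rw [← EReal.coe_add]
          norm_cast
          ring
  have hφmc : ∀ u v : X, ∀ a c : ℝ, φ u = (a : EReal) → φ v = (c : EReal) →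
      φ ((1/2:ℝ) • u + (1/2:ℝ) • v) ≤ (((a + c)/2 : ℝ) : EReal) := by
    intro u v a c hu hv
    have h := hconv u v (1/2) (1/2) (by norm_num) (by norm_num) (by norm_num)
    rw [hu, hv] at h
    refine h.trans_eq ?_
    norm_cast
    ring
  -- pbar θb minimizes the ψ-prox objective
  have hψprox : IsProx ψf r z (pbar θb) := by
    intro x
    have hupper : L θb x ≤ proxObj ψf r z x := by
      rw [hL, proxObj, hψf]
      simp only
      have h1 : (((inner ℝ θb (A (x - x₀) + b) : ℝ) : ℝ) : EReal) + φ x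
          ≤ φ x + ((supportFn 𝔄 (A (x - x₀) + b) : ℝ) : EReal) := by
        rw [add_comm (φ x)]
        exact add_le_add_left (EReal.coe_le_coe_iff.mpr (hσ_ge θb hθbmem _)) _
      calc (((1/(2*r)) * ‖x - z‖^2 + (inner ℝ θb (A (x - x₀) + b) : ℝ) : ℝ) : EReal) + φ x
          = (((1/(2*r)) * ‖x - z‖^2 : ℝ) : EReal)
            + ((((inner ℝ θb (A (x - x₀) + b) : ℝ) : ℝ) : EReal) + φ x) := by
            rw [← add_assoc, ← EReal.coe_add]
        _ ≤ _ := add_le_add_right h1 _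
    have heq : proxObj ψf r z (pbar θb) = L θb (pbar θb) := by
      rw [proxObj, hL, hψf]
      simp only
      rw [hfp, hσeq, ← EReal.coe_add, ← EReal.coe_add, ← EReal.coe_add]
      norm_cast
      ring
    rw [heq]
    exact (hpbar θb x).trans hupper
  -- pbar θb minimizes the shifted φ-prox objective
  set w := (ContinuousLinearMap.adjoint A) θb with hw
  have hshift : ∀ x : X, proxObj φ r (z - r • w) x
      = L θb x + ((-(inner ℝ w z : ℝ) + (r/2)*‖w‖^2 + (inner ℝ θb (A x₀) : ℝ)
          - (inner ℝ θb b : ℝ) : ℝ) : EReal) := by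
    intro x
    have hx : (1/(2*r)) * ‖x - (z - r • w)‖^2
        = ((1/(2*r))*‖x - z‖^2 + (inner ℝ θb (A (x - x₀) + b) : ℝ))
          + (-(inner ℝ w z : ℝ) + (r/2)*‖w‖^2 + (inner ℝ θb (A x₀) : ℝ) - (inner ℝ θb b : ℝ)) := by
      have hv : x - (z - r • w) = (x - z) + r • w := by module
      rw [hv, norm_add_sq_real]
      have h1 : (inner ℝ (x - z) (r • w) : ℝ) = r * ((inner ℝ w x : ℝ) - (inner ℝ w z : ℝ)) := by
        rw [real_inner_smul_right, real_inner_comm, inner_sub_right]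
      have h2 : ‖r • w‖^2 = r^2 * ‖w‖^2 := by
        rw [norm_smul, Real.norm_eq_abs, mul_pow, sq_abs]
      have h3 : (inner ℝ θb (A (x - x₀) + b) : ℝ)
          = (inner ℝ w x : ℝ) - (inner ℝ θb (A x₀) : ℝ) + (inner ℝ θb b : ℝ) := by
        rw [inner_add_right, map_sub, inner_sub_right, hw,
          ContinuousLinearMap.adjoint_inner_left]
      rw [h1, h2, h3]
      have hrne : r ≠ 0 := ne_of_gt hr
      field_simp
      ring
    rw [proxObj, hL, hx, EReal.coe_add, add_right_comm]
  have hφprox : IsProx φ r (z - r • w) (pbar θb) := by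
    intro x
    rw [hshift, hshift]
    exact add_le_add_left (hpbar θb x) _
  -- conclude by uniqueness of prox points
  have h1 : q = pbar θb := prox_unique ψf r hr z hψbot hψfin hψmc q (pbar θb) hq hψprox
  have h2 : pφ = pbar θb := prox_unique φ r hr (z - r • w) hbot ⟨x₁, hx₁⟩ hφmc pφ (pbar θb) hpφ hφprox
  rw [h1, h2]
end
end

section
/- Let X be a real Hilbert space, f : X → ℝ Fréchet differentiable with ∇f Lipschitz of modulus M_f and f strongly convex with modulus ω > 0, and ψ : X → (−∞,+∞] proper, closed, convex. Define G(x,t) := (1/t)(x − prox_{tψ}(x − t∇f(x))). Then for all t ∈ (0, 2ω/M_f²) the map x ↦ G(x,t) is strongly monotone with modulus ω − (t/2)M_f², i.e., ⟨G(x,t) − G(y,t), x − y⟩ ≥ (ω − (t/2)M_f²)‖x − y‖² for all x, y ∈ X. -/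
noncomputable section

/-- At a prox point, `ψ` is finite. -/
lemma prox_ne_top' {X : Type*} [NormedAddCommGroup X] (ψ : X → EReal)
    (hproper : ProperFn ψ) (t : ℝ) (u p : X) (hp : IsProx ψ t u p) : ψ p ≠ ⊤ := by
  obtain ⟨h0, x0, hx0⟩ := hproper
  intro hT
  have h := hp x0
  rw [proxObj, proxObj, hT] at h
  have h2 : (((1 / (2 * t)) * ‖p - u‖ ^ 2 : ℝ) : EReal) + ⊤ = ⊤ := rfl
  rw [h2, top_le_iff] at h
  have hb := EReal.coe_toReal hx0 (h0 x0)
  rw [← hb, ← EReal.coe_add] at h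
  exact EReal.coe_ne_top _ h

/-- Subgradient inequality at a prox point (division-free real form). -/
lemma prox_subgrad' {X : Type*} [NormedAddCommGroup X] [InnerProductSpace ℝ X]
    (ψ : X → EReal) (hconv : ConvexFnE ψ)
    (t : ℝ) (ht : 0 < t) (u p : X) (hp : IsProx ψ t u p)
    (a : ℝ) (hpa : ψ p = (a : EReal)) (w : X) (b : ℝ) (hwb : ψ w = (b : EReal)) :
    t * (a - b) ≤ (inner ℝ (p - u) (w - p) : ℝ) := by
  refine le_of_forall_pos_le_add (fun ε hε => ?_)
  have hC0 : (0:ℝ) ≤ ‖w - p‖ ^ 2 := by positivity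
  set l : ℝ := min 1 (2 * ε / (‖w - p‖ ^ 2 + 1)) with hl
  have hl0 : 0 < l := lt_min one_pos (by positivity)
  have hl1 : l ≤ 1 := min_le_left _ _
  have hlC : l * ‖w - p‖ ^ 2 ≤ 2 * ε := by
    have h1 : l ≤ 2 * ε / (‖w - p‖ ^ 2 + 1) := min_le_right _ _
    have h2 : l * (‖w - p‖ ^ 2 + 1) ≤ 2 * ε := by
      rw [← le_div_iff₀ (by positivity)]; exact h1
    nlinarith
  -- convexity
  have hx : p + l • (w - p) = (1 - l) • p + l • w := by module
  have hcv := hconv p w (1 - l) l (by linarith) hl0.le (by ring)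
  rw [hpa, hwb, ← EReal.coe_mul, ← EReal.coe_mul, ← EReal.coe_add] at hcv
  have hcv' : ψ (p + l • (w - p)) ≤ (((1 - l) * a + l * b : ℝ) : EReal) := by
    rw [hx]; exact hcv
  -- minimality
  have hmin := hp (p + l • (w - p))
  rw [proxObj, proxObj, hpa] at hmin
  have hmin2 : (((1 / (2 * t)) * ‖p - u‖ ^ 2 + a : ℝ) : EReal) ≤
      (((1 / (2 * t)) * ‖p + l • (w - p) - u‖ ^ 2 + ((1 - l) * a + l * b) : ℝ) : EReal) := by
    rw [EReal.coe_add, EReal.coe_add]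
    exact hmin.trans (add_le_add le_rfl hcv')
  have hR : (1 / (2 * t)) * ‖p - u‖ ^ 2 + a ≤
      (1 / (2 * t)) * ‖p + l • (w - p) - u‖ ^ 2 + ((1 - l) * a + l * b) :=
    EReal.coe_le_coe_iff.mp hmin2
  -- expand the norm
  have hexp : ‖p + l • (w - p) - u‖ ^ 2 =
      ‖p - u‖ ^ 2 + 2 * (l * (inner ℝ (p - u) (w - p) : ℝ)) + l ^ 2 * ‖w - p‖ ^ 2 := by
    have h1 : p + l • (w - p) - u = (p - u) + l • (w - p) := by abel
    rw [h1, norm_add_sq_real, real_inner_smul_right, norm_smul, Real.norm_eq_abs,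
      abs_of_pos hl0]
    ring
  rw [hexp] at hR
  have ht' : t ≠ 0 := ne_of_gt ht
  have h2 : a - ((1 - l) * a + l * b) ≤
      (1 / (2 * t)) * (2 * (l * (inner ℝ (p - u) (w - p) : ℝ)) + l ^ 2 * ‖w - p‖ ^ 2) := by
    nlinarith [hR]
  rw [one_div, ← div_eq_inv_mul, le_div_iff₀ (by positivity : (0:ℝ) < 2 * t)] at h2
  -- divide by l and conclude
  have h3 : l * (2 * (t * (a - b))) ≤
      l * (2 * (inner ℝ (p - u) (w - p) : ℝ) + l * ‖w - p‖ ^ 2) := by nlinarith [h2]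
  have h4 : 2 * (t * (a - b)) ≤ 2 * (inner ℝ (p - u) (w - p) : ℝ) + l * ‖w - p‖ ^ 2 :=
    le_of_mul_le_mul_left h3 hl0
  linarith

theorem stmt_14 {X : Type*} [NormedAddCommGroup X] [InnerProductSpace ℝ X] [CompleteSpace X]
    (f : X → ℝ) (f' : X → X) (M_f ω : ℝ) (hω : 0 < ω)
    (hf : ∀ x : X, HasGradientAt f (f' x) x)
    (hlip : ∀ x y : X, ‖f' x - f' y‖ ≤ M_f * ‖x - y‖)
    (hsc : ∀ x y : X, ω * ‖x - y‖ ^ 2 ≤ (inner ℝ (f' x - f' y) (x - y) : ℝ))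
    (ψ : X → EReal) (hproper : ProperFn ψ) (hconv : ConvexFnE ψ)
    (hlsc : LowerSemicontinuous ψ)
    (P : ℝ → X → X) (hP : ∀ t : ℝ, 0 < t → ∀ z : X, IsProx ψ t z (P t z)) :
    ∀ t : ℝ, 0 < t → t < 2 * ω / M_f ^ 2 → ∀ x y : X,
      (ω - (t / 2) * M_f ^ 2) * ‖x - y‖ ^ 2 ≤
        (inner ℝ ((1 / t) • (x - P t (x - t • f' x)) - (1 / t) • (y - P t (y - t • f' y)))
          (x - y) : ℝ) := by
  intro t ht ht2 x y
  set u : X := x - t • f' x with hu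
  set v : X := y - t • f' y with hv
  set p : X := P t u with hpdef
  set q : X := P t v with hqdef
  have hpp : IsProx ψ t u p := hP t ht u
  have hqq : IsProx ψ t v q := hP t ht v
  -- ψ is finite at p and q
  have hpa : ψ p = ((ψ p).toReal : EReal) :=
    (EReal.coe_toReal (prox_ne_top' ψ hproper t u p hpp) (hproper.1 p)).symm
  have hqa : ψ q = ((ψ q).toReal : EReal) :=
    (EReal.coe_toReal (prox_ne_top' ψ hproper t v q hqq) (hproper.1 q)).symm
  -- monotonicity of the subdifferential
  have h1 := prox_subgrad' ψ hconv t ht u p hpp _ hpa q _ hqa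
  have h2 := prox_subgrad' ψ hconv t ht v q hqq _ hqa p _ hpa
  have hmono : (0:ℝ) ≤ (inner ℝ ((u - p) - (v - q)) (p - q) : ℝ) := by
    have e1 : (inner ℝ ((u - p) - (v - q)) (p - q) : ℝ) =
        (inner ℝ (p - u) (q - p) : ℝ) + (inner ℝ (q - v) (p - q) : ℝ) := by
      simp only [inner_sub_left, inner_sub_right]
      ring
    rw [e1]
    linarith
  -- abbreviations
  set d : X := x - y with hd
  set e : X := p - q with he
  set g : X := f' x - f' y with hg
  -- u - v = d - t • g
  have huv : u - p - (v - q) = d - t • g - e := by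
    rw [hu, hv, hd, he, hg]; module
  rw [huv] at hmono
  have hmono2 : (0:ℝ) ≤ (inner ℝ d e : ℝ) - t * (inner ℝ g e : ℝ) - ‖e‖ ^ 2 := by
    have := hmono
    rw [inner_sub_left, inner_sub_left, real_inner_smul_left,
      real_inner_self_eq_norm_sq] at this
    linarith
  -- the left-hand side inner ℝ product
  have hlhs : (inner ℝ ((1 / t) • (x - p) - (1 / t) • (y - q)) d : ℝ) =
      (1 / t) * ((inner ℝ d d : ℝ) - (inner ℝ e d : ℝ)) := by
    have hcomb : (1 / t) • (x - p) - (1 / t) • (y - q) = (1 / t) • (d - e) := by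
      rw [hd, he]; module
    rw [hcomb, real_inner_smul_left, inner_sub_left]
  rw [show (inner ℝ ((1 / t) • (x - P t (x - t • f' x)) - (1 / t) • (y - P t (y - t • f' y)))
      (x - y) : ℝ) = (inner ℝ ((1 / t) • (x - p) - (1 / t) • (y - q)) d : ℝ) from rfl, hlhs]
  -- key real estimates
  have hsc' : ω * ‖d‖ ^ 2 ≤ (inner ℝ g d : ℝ) := hsc x y
  have hlip' : ‖g‖ ≤ M_f * ‖d‖ := hlip x y
  have hcs : (inner ℝ g d : ℝ) - (inner ℝ g e : ℝ) ≤ ‖g‖ * ‖d - e‖ := by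
    have := real_inner_le_norm g (d - e)
    rw [inner_sub_right] at this
    linarith
  have hde : ‖d - e‖ ^ 2 = ‖d‖ ^ 2 - 2 * (inner ℝ d e : ℝ) + ‖e‖ ^ 2 := by
    rw [norm_sub_sq_real]
  have hed : (inner ℝ e d : ℝ) = (inner ℝ d e : ℝ) := real_inner_comm d e
  have hdd : (inner ℝ d d : ℝ) = ‖d‖ ^ 2 := real_inner_self_eq_norm_sq d
  rw [hed, hdd]
  -- final algebra: multiply through by t
  rw [one_div, ← div_eq_inv_mul, le_div_iff₀ ht]
  have hMd : ‖g‖ * ‖d - e‖ ≤ M_f * ‖d‖ * ‖d - e‖ :=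
    mul_le_mul_of_nonneg_right hlip' (norm_nonneg _)
  nlinarith [sq_nonneg (2 * ‖d - e‖ - t * M_f * ‖d‖), mul_le_mul_of_nonneg_left hcs ht.le,
    mul_le_mul_of_nonneg_left hsc' ht.le, mul_le_mul_of_nonneg_left hMd ht.le,
    norm_nonneg (d - e), sq_nonneg ‖d‖, hde, hmono2, ht]
end
end

section
/- Let X, Y be real Hilbert spaces, 𝔄 ⊂ Y nonempty closed convex bounded with M_𝔄 := sup_{θ∈𝔄}‖θ‖, and φ : X → (−∞,+∞] proper closed convex. For affine maps w_i(x) = D_i(x−u_i)+d_i (i=1,2) with D_i ∈ L(X,Y), set Ψ_i(x) = φ(x) + σ_𝔄(w_i(x)). Then for all x, y ∈ dom φ: |(Ψ₁(x) − Ψ₂(x)) − (Ψ₁(y) − Ψ₂(y))| ≤ M_𝔄 ( ‖D₁−D₂‖_{L(X,Y)} (‖x−y‖ + 2‖y−u₁‖) + 2‖d₁ − d₂ − D₂(u₁−u₂)‖_Y ). -/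
noncomputable section

lemma supportFn_le_add {Y : Type*} [NormedAddCommGroup Y] [InnerProductSpace ℝ Y]
    (𝔄 : Set Y) (M : ℝ) (hne : 𝔄.Nonempty) (hM : ∀ θ ∈ 𝔄, ‖θ‖ ≤ M) (a b : Y) :
    supportFn 𝔄 a ≤ supportFn 𝔄 b + M * ‖a - b‖ := by
  have hbdd : BddAbove ((fun v => (inner ℝ v b : ℝ)) '' 𝔄) := by
    refine ⟨M * ‖b‖, ?_⟩
    rintro r ⟨θ, hθ, rfl⟩
    calc (inner ℝ θ b : ℝ) ≤ ‖θ‖ * ‖b‖ := real_inner_le_norm θ b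
      _ ≤ M * ‖b‖ := by
        exact mul_le_mul_of_nonneg_right (hM θ hθ) (norm_nonneg b)
  apply csSup_le (hne.image _)
  rintro r ⟨θ, hθ, rfl⟩
  have h1 : (inner ℝ θ a : ℝ) = inner ℝ θ b + inner ℝ θ (a - b) := by
    rw [← inner_add_right]; congr 1; abel
  have h2 : (inner ℝ θ b : ℝ) ≤ supportFn 𝔄 b := le_csSup hbdd ⟨θ, hθ, rfl⟩
  have h3 : (inner ℝ θ (a - b) : ℝ) ≤ M * ‖a - b‖ := by
    calc (inner ℝ θ (a - b) : ℝ) ≤ ‖θ‖ * ‖a - b‖ := real_inner_le_norm _ _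
      _ ≤ M * ‖a - b‖ := mul_le_mul_of_nonneg_right (hM θ hθ) (norm_nonneg _)
  simpa only [h1] using add_le_add h2 h3

lemma abs_supportFn_sub {Y : Type*} [NormedAddCommGroup Y] [InnerProductSpace ℝ Y]
    (𝔄 : Set Y) (M : ℝ) (hne : 𝔄.Nonempty) (hM : ∀ θ ∈ 𝔄, ‖θ‖ ≤ M) (a b : Y) :
    |supportFn 𝔄 a - supportFn 𝔄 b| ≤ M * ‖a - b‖ := by
  rw [abs_sub_le_iff]
  constructor
  · have := supportFn_le_add 𝔄 M hne hM a b; linarith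
  · have := supportFn_le_add 𝔄 M hne hM b a
    rw [show ‖b - a‖ = ‖a - b‖ from norm_sub_rev b a] at this; linarith

theorem stmt_15 {X Y : Type*} [NormedAddCommGroup X] [InnerProductSpace ℝ X] [CompleteSpace X]
    [NormedAddCommGroup Y] [InnerProductSpace ℝ Y] [CompleteSpace Y]
    (𝔄 : Set Y) (M : ℝ)
    (hne : 𝔄.Nonempty) (hclosed : IsClosed 𝔄) (hconvA : Convex ℝ 𝔄)
    (hM : ∀ θ ∈ 𝔄, ‖θ‖ ≤ M)
    (φ : X → EReal) (hproper : ProperFn φ) (hconv : ConvexFnE φ)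
    (hlsc : LowerSemicontinuous φ)
    (D₁ D₂ : X →L[ℝ] Y) (u₁ u₂ : X) (d₁ d₂ : Y)
    (Ψ₁ Ψ₂ : X → EReal)
    (hΨ₁ : ∀ x, Ψ₁ x = φ x + ((supportFn 𝔄 (D₁ (x - u₁) + d₁) : ℝ) : EReal))
    (hΨ₂ : ∀ x, Ψ₂ x = φ x + ((supportFn 𝔄 (D₂ (x - u₂) + d₂) : ℝ) : EReal)) :
    ∀ x y : X, φ x ≠ ⊤ → φ y ≠ ⊤ →
      |((Ψ₁ x).toReal - (Ψ₂ x).toReal) - ((Ψ₁ y).toReal - (Ψ₂ y).toReal)| ≤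
        M * (‖D₁ - D₂‖ * (‖x - y‖ + 2 * ‖y - u₁‖) + 2 * ‖d₁ - d₂ - D₂ (u₁ - u₂)‖) := by
  intro x y hx hy
  obtain ⟨θ₀, hθ₀⟩ := hne
  have hM0 : 0 ≤ M := le_trans (norm_nonneg θ₀) (hM θ₀ hθ₀)
  have key : ∀ z : X, φ z ≠ ⊤ →
      (Ψ₁ z).toReal - (Ψ₂ z).toReal
        = supportFn 𝔄 (D₁ (z - u₁) + d₁) - supportFn 𝔄 (D₂ (z - u₂) + d₂) := by
    intro z hz
    rw [hΨ₁ z, hΨ₂ z,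
      EReal.toReal_add hz (hproper.1 z) (EReal.coe_ne_top _) (EReal.coe_ne_bot _),
      EReal.toReal_add hz (hproper.1 z) (EReal.coe_ne_top _) (EReal.coe_ne_bot _),
      EReal.toReal_coe, EReal.toReal_coe]
    ring
  rw [key x hx, key y hy]
  set e := d₁ - d₂ - D₂ (u₁ - u₂) with he
  have hdiff : ∀ z : X, (D₁ (z - u₁) + d₁) - (D₂ (z - u₂) + d₂)
      = (D₁ - D₂) (z - u₁) + e := by
    intro z
    simp only [he, ContinuousLinearMap.sub_apply, map_sub]
    abel
  have hbnd : ∀ z : X,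
      |supportFn 𝔄 (D₁ (z - u₁) + d₁) - supportFn 𝔄 (D₂ (z - u₂) + d₂)|
        ≤ M * (‖D₁ - D₂‖ * ‖z - u₁‖ + ‖e‖) := by
    intro z
    refine le_trans (abs_supportFn_sub 𝔄 M ⟨θ₀, hθ₀⟩ hM _ _) ?_
    apply mul_le_mul_of_nonneg_left _ hM0
    rw [hdiff z]
    refine le_trans (norm_add_le _ _) ?_
    exact add_le_add_left ((D₁ - D₂).le_opNorm _) _
  have hx1 : ‖x - u₁‖ ≤ ‖x - y‖ + ‖y - u₁‖ := by
    have : x - u₁ = (x - y) + (y - u₁) := by abel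
    rw [this]; exact norm_add_le _ _
  have h1 := hbnd x
  have h2 := hbnd y
  have hD0 : 0 ≤ ‖D₁ - D₂‖ := norm_nonneg _
  calc |_| ≤ |supportFn 𝔄 (D₁ (x - u₁) + d₁) - supportFn 𝔄 (D₂ (x - u₂) + d₂)|
        + |supportFn 𝔄 (D₁ (y - u₁) + d₁) - supportFn 𝔄 (D₂ (y - u₂) + d₂)| :=
      abs_sub _ _
    _ ≤ M * (‖D₁ - D₂‖ * ‖x - u₁‖ + ‖e‖) + M * (‖D₁ - D₂‖ * ‖y - u₁‖ + ‖e‖) :=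
      add_le_add h1 h2
    _ ≤ M * (‖D₁ - D₂‖ * (‖x - y‖ + 2 * ‖y - u₁‖) + 2 * ‖e‖) := by
      nlinarith [mul_le_mul_of_nonneg_left hx1 hD0, mul_nonneg hM0 hD0]
end
end
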